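/- arXiv:2306.07844 — 2 statements merged into one kernel-verified Lean document; each statement's English description precedes it below -/
import Mathlib

section
/- Let P ⊆ ℕ be ω-closed with 0 ∈ P and with at least two elements, and let ε be an injective endomorphism of the semigroup B_ω^𝓕 (𝓕 = {[p) : p ∈ P}). If ε(0,0,k) = (0,0,k) for some natural number k ≥ 2 with k ∈ P, then ε is the identity map. (Lemma 2.2) -/
/-- A set `P ⊆ ℕ` of left endpoints encodes an ω-closed family
`𝓕 = {[p) : p ∈ P}` of nonempty inductive subsets of ω iff
`max p₁ (p₂ ∸ n) ∈ P` for all `p₁, p₂ ∈ P` and `n ∈ ℕ`. -/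
def OmegaClosed (P : Set ℕ) : Prop :=
  ∀ p₁ ∈ P, ∀ p₂ ∈ P, ∀ n : ℕ, max p₁ (p₂ - n) ∈ P

/-- The multiplication of the semigroup `B_ω^𝓕` on triples `(i, j, p)`:
`(i₁,j₁,p₁)·(i₂,j₂,p₂) = (i₁ + (i₂ ∸ j₁), j₂ + (j₁ ∸ i₂), max (p₁ ∸ (i₂ ∸ j₁)) (p₂ ∸ (j₁ ∸ i₂)))`
(the third coordinate records `(j₁ - i₂ + [p₁)) ∩ [p₂)` etc.). -/
def bmul (x y : ℕ × ℕ × ℕ) : ℕ × ℕ × ℕ :=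
  (x.1 + (y.1 - x.2.1), y.2.1 + (x.2.1 - y.1),
    max (x.2.2 - (y.1 - x.2.1)) (y.2.2 - (x.2.1 - y.1)))

/-- The carrier of `B_ω^𝓕`: triples whose third coordinate lies in `P`. -/
def BF (P : Set ℕ) : Set (ℕ × ℕ × ℕ) := {x | x.2.2 ∈ P}

/-- `ε` is an endomorphism of the semigroup `B_ω^𝓕`. -/
def IsEndo (P : Set ℕ) (ε : ℕ × ℕ × ℕ → ℕ × ℕ × ℕ) : Prop :=
  (∀ x ∈ BF P, ε x ∈ BF P) ∧
    ∀ x ∈ BF P, ∀ y ∈ BF P, ε (bmul x y) = bmul (ε x) (ε y)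

lemma memBF {P : Set ℕ} {p : ℕ} (i j : ℕ) (hp : p ∈ P) : (i, j, p) ∈ BF P := hp

lemma bmul_def (i1 j1 p1 i2 j2 p2 : ℕ) :
    bmul (i1, j1, p1) (i2, j2, p2) =
      (i1 + (i2 - j1), j2 + (j1 - i2), max (p1 - (i2 - j1)) (p2 - (j1 - i2))) := rfl

lemma max_eq_add_sub (a b : ℕ) : max a b = a + (b - a) := by
  rcases Nat.le_total b a with h | h
  · rw [max_eq_left h]; omega
  · rw [max_eq_right h]; omega

lemma bmul_def' (i1 j1 p1 i2 j2 p2 : ℕ) :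
    bmul (i1, j1, p1) (i2, j2, p2) =
      (i1 + (i2 - j1), j2 + (j1 - i2),
        (p1 - (i2 - j1)) + ((p2 - (j1 - i2)) - (p1 - (i2 - j1)))) := by
  rw [bmul_def, max_eq_add_sub]

/-- **Lemma 2.2.** If an injective endomorphism `ε` of `B_ω^𝓕` (`P` ω-closed, `0 ∈ P`,
`P` with at least two elements) satisfies `ε (0,0,k) = (0,0,k)` for some `k ≥ 2` with
`k ∈ P`, then `ε` is the identity. -/
theorem identity_of_fixes_zero_zero_k (P : Set ℕ) (hP : OmegaClosed P) (h0 : 0 ∈ P)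
    (hP2 : P.Nontrivial) (ε : ℕ × ℕ × ℕ → ℕ × ℕ × ℕ)
    (hend : IsEndo P ε) (hinj : Set.InjOn ε (BF P))
    (k : ℕ) (hk : 2 ≤ k) (hkP : k ∈ P) (hfix : ε (0, 0, k) = (0, 0, k)) :
    ∀ x ∈ BF P, ε x = x := by
  obtain ⟨hBF, hmul⟩ := hend
  -- P is downward closed
  have hdown : ∀ p ∈ P, ∀ n : ℕ, p - n ∈ P := by
    intro p hp n
    have := hP 0 h0 p hp n
    rwa [max_eq_right (Nat.zero_le _)] at this
  have hle : ∀ p : ℕ, p ≤ k → p ∈ P := by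
    intro p hpk
    have := hdown k hkP (k - p)
    rwa [Nat.sub_sub_self hpk] at this
  -- Step 1: shape of ε (0,0,p) for p ≤ k
  have hshape : ∀ p : ℕ, p ≤ k → ∃ w : ℕ, w ≤ k ∧ ε (0, 0, p) = (0, 0, w) := by
    intro p hpk
    have hp : p ∈ P := hle p hpk
    have h1 : bmul ((0 : ℕ), (0 : ℕ), p) (0, 0, k) = (0, 0, k) := by
      rw [bmul_def']; try simp only [Prod.mk.injEq, true_and, and_true]; try omega
    have h2 := hmul ((0 : ℕ), (0 : ℕ), p) (memBF 0 0 hp) ((0 : ℕ), (0 : ℕ), k) (memBF 0 0 hkP)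
    rw [h1, hfix] at h2
    rcases hz : ε ((0 : ℕ), (0 : ℕ), p) with ⟨u, v, w⟩
    rw [hz, bmul_def'] at h2
    simp only [Prod.mk.injEq, true_and, and_true] at h2
    refine ⟨w, by omega, ?_⟩
    simp only [Prod.mk.injEq, true_and, and_true]
    omega
  -- strict monotonicity of p ↦ (ε (0,0,p)).2.2 on {0..k}
  have hstrict : ∀ p q : ℕ, p < q → q ≤ k →
      (ε (0, 0, p)).2.2 < (ε (0, 0, q)).2.2 := by
    intro p q hpq hqk
    obtain ⟨w1, hw1k, hw1⟩ := hshape p (by omega)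
    obtain ⟨w2, hw2k, hw2⟩ := hshape q hqk
    have hrel : bmul ((0 : ℕ), (0 : ℕ), p) (0, 0, q) = (0, 0, q) := by
      rw [bmul_def']; try simp only [Prod.mk.injEq, true_and, and_true]; try omega
    have e := hmul ((0 : ℕ), (0 : ℕ), p) (memBF 0 0 (hle p (by omega)))
      ((0 : ℕ), (0 : ℕ), q) (memBF 0 0 (hle q hqk))
    rw [hrel, hw1, hw2, bmul_def'] at e
    simp only [Prod.mk.injEq, true_and, and_true] at e
    have hne : w1 ≠ w2 := by
      intro hww
      have heq : ε ((0 : ℕ), (0 : ℕ), p) = ε ((0 : ℕ), (0 : ℕ), q) := by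
        rw [hw1, hw2, hww]
      have := hinj (memBF 0 0 (hle p (by omega))) (memBF 0 0 (hle q hqk)) heq
      simp only [Prod.mk.injEq, true_and, and_true] at this
      omega
    rw [hw1, hw2]
    show w1 < w2
    omega
  have hge : ∀ p : ℕ, p ≤ k → p ≤ (ε (0, 0, p)).2.2 := by
    intro p
    induction p with
    | zero => intro _; exact Nat.zero_le _
    | succ n ih =>
      intro h
      have h1 := hstrict n (n + 1) (by omega) h
      have h2 := ih (by omega)
      omega
  have hdle : ∀ d p : ℕ, p + d ≤ k →
      (ε (0, 0, p)).2.2 + d ≤ (ε (0, 0, p + d)).2.2 := by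
    intro d
    induction d with
    | zero => intro p _; simp
    | succ n ih =>
      intro p h
      have h1 := ih p (by omega)
      have h2 := hstrict (p + n) (p + n + 1) (by omega) (by omega)
      have h3 : (ε (0, 0, p + (n + 1))).2.2 = (ε (0, 0, p + n + 1)).2.2 := rfl
      omega
  have hEfix : ∀ p : ℕ, p ≤ k → ε ((0 : ℕ), (0 : ℕ), p) = (0, 0, p) := by
    intro p hpk
    obtain ⟨w, hwk, hw⟩ := hshape p hpk
    have h1 := hge p hpk
    have h2 := hdle (k - p) p (by omega)
    have h3 : p + (k - p) = k := by omega
    rw [h3, hw, hfix] at h2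
    rw [hw] at h1
    have h1' : p ≤ w := h1
    have h2' : w + (k - p) ≤ k := h2
    have hwp : w = p := by omega
    rw [hw, hwp]
  -- Step 2: ε fixes (0,1,0) and (1,0,0)
  have h000 : ε ((0 : ℕ), (0 : ℕ), (0 : ℕ)) = (0, 0, 0) := hEfix 0 (by omega)
  have h001 : ε ((0 : ℕ), (0 : ℕ), (1 : ℕ)) = (0, 0, 1) := hEfix 1 (by omega)
  have h002 : ε ((0 : ℕ), (0 : ℕ), (2 : ℕ)) = (0, 0, 2) := hEfix 2 hk
  have hab0 : bmul ((0 : ℕ), (1 : ℕ), (0 : ℕ)) (1, 0, 0) = (0, 0, 0) := by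
    rw [bmul_def']; try simp only [Prod.mk.injEq, true_and, and_true]; try omega
  have e6 := hmul ((0 : ℕ), (1 : ℕ), (0 : ℕ)) (memBF 0 1 h0) ((1 : ℕ), (0 : ℕ), (0 : ℕ)) (memBF 1 0 h0)
  rw [hab0, h000] at e6
  rcases hA : ε ((0 : ℕ), (1 : ℕ), (0 : ℕ)) with ⟨a1, a2, a3⟩
  rcases hB : ε ((1 : ℕ), (0 : ℕ), (0 : ℕ)) with ⟨b1, b2, b3⟩
  rw [hA, hB, bmul_def'] at e6
  simp only [Prod.mk.injEq, true_and, and_true] at e6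
  have hvals : a1 = 0 ∧ b2 = 0 ∧ a2 = b1 ∧ a3 = 0 ∧ b3 = 0 := by omega
  obtain ⟨ha1, hb2, hb1, ha3, hb3⟩ := hvals
  subst ha1; subst hb2; subst hb1; subst ha3; subst hb3
  -- a2 ≥ 1
  have hrel1 : bmul ((0 : ℕ), (1 : ℕ), (0 : ℕ)) (0, 0, 1) = (0, 1, 0) := by
    rw [bmul_def']; try simp only [Prod.mk.injEq, true_and, and_true]; try omega
  have e7 := hmul ((0 : ℕ), (1 : ℕ), (0 : ℕ)) (memBF 0 1 h0)
    ((0 : ℕ), (0 : ℕ), (1 : ℕ)) (memBF 0 0 (hle 1 (by omega)))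
  rw [hrel1, hA, h001, bmul_def'] at e7
  simp only [Prod.mk.injEq, true_and, and_true] at e7
  have hm1 : 1 ≤ a2 := by omega
  -- ε (1,1,0) = (a2, a2, 0)
  have hba : bmul ((1 : ℕ), (0 : ℕ), (0 : ℕ)) (0, 1, 0) = (1, 1, 0) := by
    rw [bmul_def']; try simp only [Prod.mk.injEq, true_and, and_true]; try omega
  have e8 := hmul ((1 : ℕ), (0 : ℕ), (0 : ℕ)) (memBF 1 0 h0)
    ((0 : ℕ), (1 : ℕ), (0 : ℕ)) (memBF 0 1 h0)
  rw [hba, hA, hB, bmul_def'] at e8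
  have e8' : ε ((1 : ℕ), (1 : ℕ), (0 : ℕ)) = (a2, a2, 0) := by
    rw [e8]; simp only [Prod.mk.injEq, true_and, and_true]; omega
  -- a2 ≤ 1 via (0,0,2)·(1,1,0) = (1,1,1)
  have hrel2 : bmul ((0 : ℕ), (0 : ℕ), (2 : ℕ)) (1, 1, 0) = (1, 1, 1) := by
    rw [bmul_def']; try simp only [Prod.mk.injEq, true_and, and_true]; try omega
  have e9 := hmul ((0 : ℕ), (0 : ℕ), (2 : ℕ)) (memBF 0 0 (hle 2 hk))
    ((1 : ℕ), (1 : ℕ), (0 : ℕ)) (memBF 1 1 h0)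
  rw [hrel2, h002, e8', bmul_def'] at e9
  have hm2 : a2 ≤ 1 := by
    by_contra hc
    push_neg at hc
    have heq : ε ((1 : ℕ), (1 : ℕ), (1 : ℕ)) = ε ((1 : ℕ), (1 : ℕ), (0 : ℕ)) := by
      rw [e9, e8']; simp only [Prod.mk.injEq, true_and, and_true]; omega
    have := hinj (memBF 1 1 (hle 1 (by omega))) (memBF 1 1 h0) heq
    simp only [Prod.mk.injEq, true_and, and_true] at this
    omega
  have hm : a2 = 1 := by omega
  subst hm
  have hea : ε ((0 : ℕ), (1 : ℕ), (0 : ℕ)) = (0, 1, 0) := hA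
  have heb : ε ((1 : ℕ), (0 : ℕ), (0 : ℕ)) = (1, 0, 0) := hB
  -- Step 3: ε fixes all (0,0,p), p ∈ P
  have hE : ∀ p : ℕ, p ∈ P → ε ((0 : ℕ), (0 : ℕ), p) = (0, 0, p) := by
    intro p
    induction p using Nat.strong_induction_on with
    | _ p ih =>
      intro hp
      by_cases hpk : p ≤ k
      · exact hEfix p hpk
      · push_neg at hpk
        have hp1 : p - 1 ∈ P := hdown p hp 1
        have ih1 : ε ((0 : ℕ), (0 : ℕ), p - 1) = (0, 0, p - 1) := ih (p - 1) (by omega) hp1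
        -- ε (1,1,p-1) = (1,1,p-1)
        have hb1 : bmul ((1 : ℕ), (0 : ℕ), (0 : ℕ)) ((0 : ℕ), (0 : ℕ), p - 1) = (1, 0, p - 1) := by
          rw [bmul_def']; try simp only [Prod.mk.injEq, true_and, and_true]; try omega
        have hb2 : bmul ((1 : ℕ), (0 : ℕ), p - 1) (0, 1, 0) = (1, 1, p - 1) := by
          rw [bmul_def']; try simp only [Prod.mk.injEq, true_and, and_true]; try omega
        have e1 := hmul ((1 : ℕ), (0 : ℕ), (0 : ℕ)) (memBF 1 0 h0)
          ((0 : ℕ), (0 : ℕ), p - 1) (memBF 0 0 hp1)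
        rw [heb, ih1, hb1] at e1
        have e2 := hmul ((1 : ℕ), (0 : ℕ), p - 1) (memBF 1 0 hp1)
          ((0 : ℕ), (1 : ℕ), (0 : ℕ)) (memBF 0 1 h0)
        rw [e1, hea, hb2] at e2
        -- idempotency of ε (0,0,p)
        rcases hz : ε ((0 : ℕ), (0 : ℕ), p) with ⟨u, v, w⟩
        have hgg : bmul ((0 : ℕ), (0 : ℕ), p) (0, 0, p) = (0, 0, p) := by
          rw [bmul_def']; try simp only [Prod.mk.injEq, true_and, and_true]; try omega
        have e3 := hmul ((0 : ℕ), (0 : ℕ), p) (memBF 0 0 hp) ((0 : ℕ), (0 : ℕ), p) (memBF 0 0 hp)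
        rw [hgg, hz, bmul_def'] at e3
        simp only [Prod.mk.injEq, true_and, and_true] at e3
        have huv : u = v := by omega
        subst huv
        -- a₀ · (0,0,p) · b₀ = (0,0,p-1)
        have ha1 : bmul ((0 : ℕ), (1 : ℕ), (0 : ℕ)) ((0 : ℕ), (0 : ℕ), p) = (0, 1, p - 1) := by
          rw [bmul_def']; try simp only [Prod.mk.injEq, true_and, and_true]; try omega
        have e4 := hmul ((0 : ℕ), (1 : ℕ), (0 : ℕ)) (memBF 0 1 h0) ((0 : ℕ), (0 : ℕ), p) (memBF 0 0 hp)
        rw [ha1, hea, hz] at e4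
        have ha2 : bmul ((0 : ℕ), (1 : ℕ), p - 1) (1, 0, 0) = (0, 0, p - 1) := by
          rw [bmul_def']; try simp only [Prod.mk.injEq, true_and, and_true]; try omega
        have e5 := hmul ((0 : ℕ), (1 : ℕ), p - 1) (memBF 0 1 hp1)
          ((1 : ℕ), (0 : ℕ), (0 : ℕ)) (memBF 1 0 h0)
        rw [ha2, ih1, e4, heb, bmul_def', bmul_def'] at e5
        simp only [Prod.mk.injEq, true_and, and_true] at e5
        have hcase : (u = 0 ∧ w = p) ∨ (u = 1 ∧ w = p - 1) := by omega
        rcases hcase with ⟨hu, hw⟩ | ⟨hu, hw⟩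
        · rw [hu, hw]
        · exfalso
          have heq : ε ((0 : ℕ), (0 : ℕ), p) = ε ((1 : ℕ), (1 : ℕ), p - 1) := by
            rw [hz, e2, hu, hw]
          have := hinj (memBF 0 0 hp) (memBF 1 1 hp1) heq
          simp only [Prod.mk.injEq, true_and, and_true] at this
          omega
  -- Step 4: general elements
  have h0j : ∀ j p : ℕ, p ∈ P → ε ((0 : ℕ), j, p) = (0, j, p) := by
    intro j
    induction j with
    | zero => exact fun p hp => hE p hp
    | succ n ih =>
      intro p hp
      have hr : bmul ((0 : ℕ), n, p) (0, 1, 0) = (0, n + 1, p) := by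
        rw [bmul_def']; try simp only [Prod.mk.injEq, true_and, and_true]; try omega
      have e := hmul ((0 : ℕ), n, p) (memBF 0 n hp) ((0 : ℕ), (1 : ℕ), (0 : ℕ)) (memBF 0 1 h0)
      rw [ih p hp, hea, hr] at e
      exact e
  have hij : ∀ i j p : ℕ, p ∈ P → ε (i, j, p) = (i, j, p) := by
    intro i
    induction i with
    | zero => exact h0j
    | succ n ih =>
      intro j p hp
      have hr : bmul ((1 : ℕ), (0 : ℕ), (0 : ℕ)) (n, j, p) = (n + 1, j, p) := by
        rw [bmul_def']; try simp only [Prod.mk.injEq, true_and, and_true]; try omega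
      have e := hmul ((1 : ℕ), (0 : ℕ), (0 : ℕ)) (memBF 1 0 h0) ((n : ℕ), j, p) (memBF n j hp)
      rw [heb, ih j p hp, hr] at e
      exact e
  intro x hx
  obtain ⟨i, j, p⟩ := x
  exact hij i j p hx
end

section
/- Let P ⊆ ℕ be ω-closed with 0 ∈ P and with at least two elements. Then every automorphism (bijective endomorphism) of the semigroup B_ω^𝓕 (𝓕 = {[p) : p ∈ P}) is the identity map. -/
lemma bmul_eval (i₁ j₁ p₁ i₂ j₂ p₂ : ℕ) :
    bmul (i₁, j₁, p₁) (i₂, j₂, p₂)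
      = (i₁ + (i₂ - j₁), j₂ + (j₁ - i₂), max (p₁ - (i₂ - j₁)) (p₂ - (j₁ - i₂))) := rfl

/-- Every automorphism (bijective endomorphism) of `B_ω^𝓕` (`P` ω-closed, `0 ∈ P`,
`P` with at least two elements) is the identity map. -/
theorem automorphism_is_identity (P : Set ℕ) (hP : OmegaClosed P) (h0 : 0 ∈ P)
    (hP2 : P.Nontrivial) (ε : ℕ × ℕ × ℕ → ℕ × ℕ × ℕ)
    (hbij : Set.BijOn ε (BF P) (BF P))
    (hmul : ∀ x ∈ BF P, ∀ y ∈ BF P, ε (bmul x y) = bmul (ε x) (ε y)) :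
    ∀ x ∈ BF P, ε x = x := by
  have hmaps := hbij.mapsTo
  have hinj := hbij.injOn
  have hsurj := hbij.surjOn
  -- membership in BF P is just the third coordinate being in P
  have hmem : ∀ i j p : ℕ, ((i, j, p) ∈ BF P) ↔ p ∈ P := fun _ _ _ => Iff.rfl
  -- P is downward closed
  have hdc : ∀ p ∈ P, ∀ n : ℕ, p - n ∈ P := by
    intro p hp n
    have := hP 0 h0 p hp n
    simpa using this
  -- identity element
  have he0r : ∀ x : ℕ × ℕ × ℕ, bmul x (0, 0, 0) = x := by
    rintro ⟨i, j, p⟩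
    simp only [bmul_eval, Prod.mk.injEq]
    omega
  have he0l : ∀ x : ℕ × ℕ × ℕ, bmul (0, 0, 0) x = x := by
    rintro ⟨i, j, p⟩
    simp only [bmul_eval, Prod.mk.injEq]
    omega
  have hm0 : ((0 : ℕ), (0 : ℕ), (0 : ℕ)) ∈ BF P := h0
  -- ε fixes the identity
  have he0 : ε (0, 0, 0) = (0, 0, 0) := by
    obtain ⟨x, hx, hex⟩ := hsurj hm0
    have h := hmul (0, 0, 0) hm0 x hx
    rw [he0l x, hex, he0r] at h
    exact h.symm
  -- classification of pairs multiplying to the identity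
  have hcls : ∀ i j p i' j' p' : ℕ, bmul (i, j, p) (i', j', p') = (0, 0, 0) →
      i = 0 ∧ p = 0 ∧ i' = j ∧ j' = 0 ∧ p' = 0 := by
    intro i j p i' j' p' h
    simp only [bmul_eval, Prod.mk.injEq] at h
    omega
  -- the generators a = (0,1,0), b = (1,0,0)
  have hamem : ((0 : ℕ), (1 : ℕ), (0 : ℕ)) ∈ BF P := h0
  have hbmem : ((1 : ℕ), (0 : ℕ), (0 : ℕ)) ∈ BF P := h0
  have hab : bmul (0, 1, 0) (1, 0, 0) = ((0 : ℕ), (0 : ℕ), (0 : ℕ)) := rfl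
  -- ε a = (0, n, 0), ε b = (n, 0, 0)
  obtain ⟨⟨a1, n, a3⟩, hAe⟩ : ∃ f : ℕ × ℕ × ℕ, ε (0, 1, 0) = f := ⟨_, rfl⟩
  obtain ⟨⟨b1, b2, b3⟩, hBe⟩ : ∃ f : ℕ × ℕ × ℕ, ε (1, 0, 0) = f := ⟨_, rfl⟩
  have hAB : bmul ((a1 : ℕ), n, a3) (b1, b2, b3) = (0, 0, 0) := by
    rw [← hAe, ← hBe, ← hmul _ hamem _ hbmem, hab, he0]
  obtain ⟨ha1, ha3, hb1, hb2, hb3⟩ := hcls _ _ _ _ _ _ hAB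
  subst ha1; subst ha3; subst hb2; subst hb3
  rw [hb1] at hBe
  -- hAe : ε (0,1,0) = (0, n, 0), hBe : ε (1,0,0) = (n, 0, 0)
  have hclosedbf : ∀ x ∈ BF P, ∀ y ∈ BF P, bmul x y ∈ BF P := by
    rintro ⟨i, j, p⟩ hx ⟨i', j', p'⟩ hy
    exact hP _ (hdc p hx _) p' hy _
  have hsmem : ∀ i j : ℕ, ((i, j, 0) : ℕ × ℕ × ℕ) ∈ BF P := fun _ _ => h0
  have hApow : ∀ m : ℕ, ε (0, m, 0) = (0, n * m, 0) := by
    intro m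
    induction m with
    | zero => simpa using he0
    | succ k ih =>
      have h1 : bmul (0, 1, 0) (0, k, 0) = ((0 : ℕ), (k + 1 : ℕ), (0 : ℕ)) := by
        simp [bmul] <;> omega
      have h := hmul (0, 1, 0) hamem (0, k, 0) (hsmem 0 k)
      rw [h1, hAe, ih] at h
      rw [h]
      simp [bmul, Prod.ext_iff, Nat.mul_succ]
  -- n = 1
  have hn1 : n = 1 := by
    obtain ⟨⟨x1, x2, x3⟩, hx, hex⟩ := hsurj hamem
    obtain ⟨⟨y1, y2, y3⟩, hy, hey⟩ := hsurj hbmem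
    have hxy : ε (bmul (x1, x2, x3) (y1, y2, y3)) = (0, 0, 0) := by
      rw [hmul _ hx _ hy, hex, hey, hab]
    have hxyid : bmul ((x1 : ℕ), x2, x3) (y1, y2, y3) = (0, 0, 0) :=
      hinj (hclosedbf _ hx _ hy) hm0 (by rw [hxy, he0])
    obtain ⟨hx1, hx3, _, _, _⟩ := hcls _ _ _ _ _ _ hxyid
    subst hx1; subst hx3
    rw [hApow x2] at hex
    have hnm : n * x2 = 1 := by
      have := congrArg (fun z : ℕ × ℕ × ℕ => z.2.1) hex
      simpa using this
    exact Nat.eq_one_of_mul_eq_one_right hnm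
  subst hn1
  -- now hAe : ε (0,1,0) = (0,1,0), hBe : ε (1,0,0) = (1,0,0)
  have hApow' : ∀ m : ℕ, ε (0, m, 0) = (0, m, 0) := by
    intro m; rw [hApow m, one_mul]
  -- powers of b
  have hBpow : ∀ m : ℕ, ε (m, 0, 0) = (m, 0, 0) := by
    intro m
    induction m with
    | zero => simpa using he0
    | succ k ih =>
      have h1 : bmul (1, 0, 0) (k, 0, 0) = ((k + 1 : ℕ), (0 : ℕ), (0 : ℕ)) := by
        simp [bmul] <;> omega
      have h := hmul (1, 0, 0) hbmem (k, 0, 0) (hsmem k 0)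
      rw [h1, hBe, ih] at h
      rw [h]
      simp [bmul, Prod.ext_iff] <;> omega
  -- key computations: a ∙ (k,k,q) ∙ b and b ∙ (k,k,q) ∙ a
  have hafb : ∀ k q : ℕ, bmul (bmul (0, 1, 0) (k, k, q)) (1, 0, 0)
      = (k - 1, k - 1, q - (1 - k)) := by
    intro k q
    simp [bmul, Prod.ext_iff] <;> omega
  have hbfa : ∀ k q : ℕ, bmul (bmul (1, 0, 0) (k, k, q)) (0, 1, 0)
      = (k + 1, k + 1, q) := by
    intro k q
    simp [bmul, Prod.ext_iff] <;> omega
  -- ε fixes all idempotents (0,0,p)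
  have hid : ∀ p : ℕ, p ∈ P → ε (0, 0, p) = (0, 0, p) := by
    intro p
    induction p using Nat.strong_induction_on with
    | _ p ih =>
      intro hp
      rcases Nat.eq_zero_or_pos p with hz | hpos
      · subst hz; exact he0
      have hp1 : p - 1 ∈ P := hdc p hp 1
      have hpmem : ((0 : ℕ), (0 : ℕ), p) ∈ BF P := hp
      have hp1mem : ((0 : ℕ), (0 : ℕ), p - 1) ∈ BF P := hp1
      have ihp : ε (0, 0, p - 1) = (0, 0, p - 1) := ih (p - 1) (by omega) hp1
      -- ε (0,0,p) is an idempotent (k,k,q)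
      have hfidem : bmul (ε (0, 0, p)) (ε (0, 0, p)) = ε (0, 0, p) := by
        have h := hmul (0, 0, p) hpmem (0, 0, p) hpmem
        have h2 : bmul ((0 : ℕ), (0 : ℕ), p) (0, 0, p) = (0, 0, p) := by
          simp [bmul, Prod.ext_iff] <;> omega
        rw [h2] at h
        exact h.symm
      obtain ⟨⟨k, k', q⟩, hf⟩ : ∃ f : ℕ × ℕ × ℕ, ε (0, 0, p) = f := ⟨_, rfl⟩
      have hkk' : k = k' := by
        rw [hf] at hfidem
        simp [bmul, Prod.ext_iff] at hfidem
        omega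
      subst hkk'
      -- a ∙ ε(0,0,p) ∙ b = ε (0,0,p-1)
      have h1 := hmul (0, 1, 0) hamem (0, 0, p) hpmem
      rw [hAe, hf] at h1
      have h2 := hmul (bmul (0, 1, 0) (0, 0, p))
        (hclosedbf _ hamem _ hpmem) (1, 0, 0) hbmem
      rw [h1, hBe, hafb k q, hafb 0 p] at h2
      simp only [Nat.zero_sub, Nat.sub_zero] at h2
      rw [ihp] at h2
      -- h2 : (0, 0, p - 1) = (k - 1, k - 1, q - (1 - k))
      simp only [Prod.mk.injEq] at h2
      have hcases : (k = 0 ∧ q = p) ∨ (k = 0 ∧ q = 0 ∧ p = 1) ∨ (k = 1 ∧ q = p - 1) := by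
        omega
      rcases hcases with ⟨hk, hq⟩ | ⟨hk, hq, hp1'⟩ | ⟨hk, hq⟩
      · rw [hf, hk, hq]
      · -- ε (0,0,p) = (0,0,0) = ε (0,0,0), contradiction with injectivity
        exfalso
        rw [hk, hq] at hf
        have := hinj hpmem hm0 (hf.trans he0.symm)
        simp only [Prod.mk.injEq] at this
        omega
      · -- ε (0,0,p) = (1,1,p-1) = ε (1,1,p-1), contradiction
        exfalso
        have g1 := hmul (1, 0, 0) hbmem (0, 0, p - 1) hp1mem
        rw [hBe, ihp] at g1
        have g2 := hmul (bmul (1, 0, 0) (0, 0, p - 1))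
          (hclosedbf _ hbmem _ hp1mem) (0, 1, 0) hamem
        rw [g1, hAe, hbfa 0 (p - 1)] at g2
        -- g2 : ε (1, 1, p - 1) = (1, 1, p - 1)
        rw [hk, hq] at hf
        have h11mem : ((1 : ℕ), (1 : ℕ), p - 1) ∈ BF P := hp1
        have := hinj hpmem h11mem (hf.trans g2.symm)
        simp only [Prod.mk.injEq] at this
        omega
  -- final assembly: (i, j, p) = (i,0,0) ∙ (0,0,p) ∙ (0,j,0)
  rintro ⟨i, j, p⟩ hx
  have hxp : p ∈ P := hx
  have u1 : bmul (i, 0, 0) (0, 0, p) = ((i : ℕ), (0 : ℕ), p) := by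
    simp [bmul, Prod.ext_iff] <;> omega
  have e1 := hmul (i, 0, 0) (hsmem i 0) (0, 0, p) hxp
  rw [u1, hBpow i, hid p hxp, u1] at e1
  -- e1 : ε (i, 0, p) = (i, 0, p)
  have u2 : bmul (i, 0, p) (0, j, 0) = ((i : ℕ), (j : ℕ), p) := by
    simp [bmul, Prod.ext_iff] <;> omega
  have hiop : ((i : ℕ), (0 : ℕ), p) ∈ BF P := hxp
  have e2 := hmul (i, 0, p) hiop (0, j, 0) (hsmem 0 j)
  rw [u2, e1, hApow' j, u2] at e2
  exact e2
end
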